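/- Let (S,T) be a pair of random variables on {0,...,m} × {0,...,n}, and let 1 ≤ s,k ≤ m and 1 ≤ t,l ≤ n. Then P(S ≥ s, T ≥ t) ≤ E[(C(m,k) − C(m−S,k))(C(n,l) − C(n−T,l))] / ((C(m,k) − C(m−s,k))(C(n,l) − C(n−t,l))). (Gumbel-type upper bound) -/

import Mathlib

open MeasureTheory

lemma choose_sub_lt_choose (m s k : ℕ) (hs1 : 1 ≤ s) (hsm : s ≤ m)
    (hk1 : 1 ≤ k) (hkm : k ≤ m) : (m - s).choose k < m.choose k := by
  obtain ⟨m', rfl⟩ : ∃ m', m = m' + 1 := ⟨m - 1, by omega⟩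
  obtain ⟨k', rfl⟩ : ∃ k', k = k' + 1 := ⟨k - 1, by omega⟩
  have h1 : (m' + 1 - s).choose (k' + 1) ≤ m'.choose (k' + 1) :=
    Nat.choose_le_choose _ (by omega)
  have h2 : 0 < m'.choose k' := Nat.choose_pos (by omega)
  have h3 : (m' + 1).choose (k' + 1) = m'.choose k' + m'.choose (k' + 1) :=
    Nat.choose_succ_succ _ _
  omega

theorem bivariate_gumbel_type_upper_bound
    {Ω : Type*} [MeasurableSpace Ω] (μ : Measure Ω) [IsProbabilityMeasure μ]
    (m n : ℕ) (S T : Ω → ℕ) (hS : Measurable S) (hT : Measurable T)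
    (hSm : ∀ᵐ ω ∂μ, S ω ≤ m) (hTn : ∀ᵐ ω ∂μ, T ω ≤ n)
    (s t k l : ℕ) (hs1 : 1 ≤ s) (hsm : s ≤ m) (hk1 : 1 ≤ k) (hkm : k ≤ m)
    (ht1 : 1 ≤ t) (htn : t ≤ n) (hl1 : 1 ≤ l) (hln : l ≤ n) :
    (μ {ω | s ≤ S ω ∧ t ≤ T ω}).toReal ≤
      (∫ ω, ((m.choose k : ℝ) - ((m - S ω).choose k)) *
          ((n.choose l : ℝ) - ((n - T ω).choose l)) ∂μ) /
        (((m.choose k : ℝ) - ((m - s).choose k)) *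
          ((n.choose l : ℝ) - ((n - t).choose l))) := by
  set f : Ω → ℝ := fun ω => ((m.choose k : ℝ) - ((m - S ω).choose k)) *
      ((n.choose l : ℝ) - ((n - T ω).choose l)) with hf
  set c1 : ℝ := (m.choose k : ℝ) - ((m - s).choose k) with hc1def
  set c2 : ℝ := (n.choose l : ℝ) - ((n - t).choose l) with hc2def
  have hc1 : 0 < c1 := by
    have := choose_sub_lt_choose m s k hs1 hsm hk1 hkm
    simp only [hc1def]; exact sub_pos.mpr (by exact_mod_cast this)
  have hc2 : 0 < c2 := by
    have := choose_sub_lt_choose n t l ht1 htn hl1 hln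
    simp only [hc2def]; exact sub_pos.mpr (by exact_mod_cast this)
  -- nonnegativity and boundedness of f (everywhere)
  have hf1nn : ∀ ω, (0:ℝ) ≤ (m.choose k : ℝ) - ((m - S ω).choose k) := fun ω => by
    have : (m - S ω).choose k ≤ m.choose k := Nat.choose_le_choose _ (Nat.sub_le _ _)
    exact sub_nonneg.mpr (by exact_mod_cast this)
  have hf2nn : ∀ ω, (0:ℝ) ≤ (n.choose l : ℝ) - ((n - T ω).choose l) := fun ω => by
    have : (n - T ω).choose l ≤ n.choose l := Nat.choose_le_choose _ (Nat.sub_le _ _)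
    exact sub_nonneg.mpr (by exact_mod_cast this)
  have hfnn : ∀ ω, 0 ≤ f ω := fun ω => mul_nonneg (hf1nn ω) (hf2nn ω)
  have hfmeas : Measurable f := by
    apply Measurable.mul
    · exact (measurable_from_nat (f := fun x : ℕ => ((m.choose k : ℝ) - ((m - x).choose k)))).comp hS
    · exact (measurable_from_nat (f := fun x : ℕ => ((n.choose l : ℝ) - ((n - x).choose l)))).comp hT
  have hfbd : ∀ ω, ‖f ω‖ ≤ (m.choose k : ℝ) * (n.choose l : ℝ) := fun ω => by
    rw [Real.norm_eq_abs, abs_of_nonneg (hfnn ω)]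
    apply mul_le_mul _ _ (hf2nn ω) (by positivity)
    · have : (0:ℝ) ≤ ((m - S ω).choose k : ℝ) := by positivity
      linarith
    · have : (0:ℝ) ≤ ((n - T ω).choose l : ℝ) := by positivity
      linarith
  have hint : Integrable f μ :=
    ⟨hfmeas.aestronglyMeasurable,
      HasFiniteIntegral.of_bounded (Filter.Eventually.of_forall hfbd)⟩
  set A : Set Ω := {ω | s ≤ S ω ∧ t ≤ T ω} with hA
  have hAmeas : MeasurableSet A := by
    have : A = S ⁻¹' (Set.Ici s) ∩ T ⁻¹' (Set.Ici t) := rfl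
    rw [this]
    exact (hS measurableSet_Ici).inter (hT measurableSet_Ici)
  rw [le_div_iff₀ (by positivity)]
  have key : ∫ ω in A, (c1 * c2) ∂μ ≤ ∫ ω, f ω ∂μ := by
    have h1 : ∫ ω in A, (c1 * c2) ∂μ ≤ ∫ ω in A, f ω ∂μ := by
      apply setIntegral_mono_on (integrableOn_const (measure_ne_top μ A))
        hint.integrableOn hAmeas
      intro ω hω
      obtain ⟨hs, ht⟩ := hω
      have e1 : c1 ≤ (m.choose k : ℝ) - ((m - S ω).choose k) := by
        have : (m - S ω).choose k ≤ (m - s).choose k := Nat.choose_le_choose _ (by omega)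
        simp only [hc1def]
        have := (Nat.cast_le (α := ℝ)).mpr this
        linarith
      have e2 : c2 ≤ (n.choose l : ℝ) - ((n - T ω).choose l) := by
        have : (n - T ω).choose l ≤ (n - t).choose l := Nat.choose_le_choose _ (by omega)
        simp only [hc2def]
        have := (Nat.cast_le (α := ℝ)).mpr this
        linarith
      exact mul_le_mul e1 e2 hc2.le (hf1nn ω)
    have h2 : ∫ ω in A, f ω ∂μ ≤ ∫ ω, f ω ∂μ :=
      setIntegral_le_integral hint (Filter.Eventually.of_forall hfnn)
    linarith
  rw [setIntegral_const] at key
  calc (μ A).toReal * (c1 * c2) = (μ A).toReal • (c1 * c2) := by rw [smul_eq_mul]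
    _ ≤ ∫ ω, f ω ∂μ := key
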